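/- Let $1 \le q < s$, define $t$ by $1/q = 1/s + 1/t$, and let $(x_j)$ be a weakly $s$-summable sequence in a Banach space $X$. Then for every scalar sequence $(\lambda_j) \in \ell_t$, the sequence $(\lambda_j x_j)$ is anisotropic $(s,q,r)$-summable for any $1 \le r \le s$, with $\|(\lambda_j x_j)\|_{A(s,q,r)} \le \|(\lambda_j)\|_t \cdot \|(x_j)\|_{w,s}$. -/

import Mathlib

open scoped BigOperators NNReal ENNReal

noncomputable section

/-- `(xs k)` belongs to `ℓ_r(X*)`. -/
def MemLr (r : ℝ) {X : Type*} [NormedAddCommGroup X] [NormedSpace ℝ X]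
    (xs : ℕ → X →L[ℝ] ℝ) : Prop :=
  Summable fun k => ‖xs k‖ ^ r

/-- The `ℓ_r(X*)` norm. -/
noncomputable def lrNorm (r : ℝ) {X : Type*} [NormedAddCommGroup X] [NormedSpace ℝ X]
    (xs : ℕ → X →L[ℝ] ℝ) : ℝ :=
  (∑' k, ‖xs k‖ ^ r) ^ (1 / r)

/-- Weakly `q`-summable sequences. -/
def WeaklySummable (q : ℝ) {X : Type*} [NormedAddCommGroup X] [NormedSpace ℝ X]
    (x : ℕ → X) : Prop :=
  ∀ f : X →L[ℝ] ℝ, Summable fun j => |f (x j)| ^ q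

/-- The weak `ℓ_q` norm. -/
noncomputable def weakNorm (q : ℝ) {X : Type*} [NormedAddCommGroup X] [NormedSpace ℝ X]
    (x : ℕ → X) : ℝ :=
  ⨆ f : {f : X →L[ℝ] ℝ // ‖f‖ ≤ 1}, (∑' j, |f.1 (x j)| ^ q) ^ (1 / q)

/-- Anisotropic `(s,q,r)`-summable sequences. -/
def AnisoSummable (s q r : ℝ) {X : Type*} [NormedAddCommGroup X] [NormedSpace ℝ X]
    (x : ℕ → X) : Prop :=
  ∀ xs : ℕ → X →L[ℝ] ℝ, MemLr r xs →
    (∀ j, Summable fun k => |xs k (x j)| ^ s) ∧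
      Summable fun j => (∑' k, |xs k (x j)| ^ s) ^ (q / s)

/-- The anisotropic `(s,q,r)` norm. -/
noncomputable def anisoNorm (s q r : ℝ) {X : Type*} [NormedAddCommGroup X] [NormedSpace ℝ X]
    (x : ℕ → X) : ℝ :=
  ⨆ xs : {xs : ℕ → X →L[ℝ] ℝ // MemLr r xs ∧ lrNorm r xs ≤ 1},
    (∑' j, (∑' k, |xs.1 k (x j)| ^ s) ^ (q / s)) ^ (1 / q)

private lemma lp_single_add' {p : ℝ≥0∞} (i : ℕ) (a b : ℝ) :
    lp.single (E := fun _ : ℕ => ℝ) p i (a + b) =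
      lp.single p i a + lp.single p i b := by
  apply lp.ext
  funext j
  by_cases h : j = i
  · subst h
    simp [lp.single_apply_self]
  · simp [lp.single_apply_ne p i _ h]

private lemma weak_sum_bound' {X : Type*} [NormedAddCommGroup X] [NormedSpace ℝ X]
    {s : ℝ} (hs : 1 < s) (x : ℕ → X) (hx : ∀ f : X →L[ℝ] ℝ, Summable fun j => |f (x j)| ^ s) :
    ∃ C : ℝ, 0 ≤ C ∧ ∀ f : X →L[ℝ] ℝ, ‖f‖ ≤ 1 → ∑' j, |f (x j)| ^ s ≤ C := by
  have hs0 : (0:ℝ) < s := lt_trans zero_lt_one hs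
  set p : ℝ≥0∞ := ENNReal.ofReal s with hp
  haveI : Fact (1 ≤ p) := ⟨by
    rw [hp, ← ENNReal.ofReal_one]
    exact ENNReal.ofReal_le_ofReal hs.le⟩
  have hpt : p.toReal = s := ENNReal.toReal_ofReal hs0.le
  have hpt0 : 0 < p.toReal := by rw [hpt]; exact hs0
  let T : ℕ → (X →L[ℝ] ℝ) →L[ℝ] lp (fun _ : ℕ => ℝ) p := fun N =>
    LinearMap.mkContinuous
      { toFun := fun f => ∑ j ∈ Finset.range N, lp.single p j (f (x j))
        map_add' := by
          intro f g
          simp only [ContinuousLinearMap.add_apply, lp_single_add', Finset.sum_add_distrib]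
        map_smul' := by
          intro c f
          simp only [ContinuousLinearMap.coe_smul', Pi.smul_apply, smul_eq_mul,
            RingHom.id_apply, Finset.smul_sum, ← lp.single_smul] }
      (∑ j ∈ Finset.range N, ‖x j‖)
      (fun f => by
        show ‖∑ j ∈ Finset.range N, lp.single (E := fun _ : ℕ => ℝ) p j (f (x j))‖ ≤
          (∑ j ∈ Finset.range N, ‖x j‖) * ‖f‖
        refine (norm_sum_le _ _).trans ?_
        have h1 : ∀ j ∈ Finset.range N,
            ‖lp.single (E := fun _ : ℕ => ℝ) p j (f (x j))‖ ≤ ‖x j‖ * ‖f‖ := by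
          intro j _
          rw [lp.norm_single (E := fun _ : ℕ => ℝ) (lt_of_lt_of_le zero_lt_one (Fact.out : 1 ≤ p)) j (f (x j))]
          calc ‖f (x j)‖ ≤ ‖f‖ * ‖x j‖ := f.le_opNorm (x j)
            _ = ‖x j‖ * ‖f‖ := mul_comm _ _
        calc ∑ j ∈ Finset.range N, ‖lp.single (E := fun _ : ℕ => ℝ) p j (f (x j))‖
            ≤ ∑ j ∈ Finset.range N, ‖x j‖ * ‖f‖ := Finset.sum_le_sum h1
          _ = (∑ j ∈ Finset.range N, ‖x j‖) * ‖f‖ := by rw [← Finset.sum_mul])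
  have hTnorm : ∀ (N : ℕ) (f : X →L[ℝ] ℝ),
      ‖T N f‖ ^ s = ∑ j ∈ Finset.range N, |f (x j)| ^ s := by
    intro N f
    have h := lp.norm_sum_single (p := p) hpt0 (fun j => f (x j)) (Finset.range N)
    rw [hpt] at h
    simp only [Real.norm_eq_abs] at h
    exact h
  have hptw : ∀ f : X →L[ℝ] ℝ, ∃ C : ℝ, ∀ N : ℕ, ‖T N f‖ ≤ C := by
    intro f
    refine ⟨(∑' j, |f (x j)| ^ s) ^ s⁻¹, fun N => ?_⟩
    have h1 : ‖T N f‖ ^ s ≤ ∑' j, |f (x j)| ^ s := by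
      rw [hTnorm]
      exact Summable.sum_le_tsum _ (fun j _ => Real.rpow_nonneg (abs_nonneg _) s) (hx f)
    calc ‖T N f‖ = (‖T N f‖ ^ s) ^ s⁻¹ :=
          (Real.rpow_rpow_inv (norm_nonneg _) hs0.ne').symm
      _ ≤ _ := Real.rpow_le_rpow (Real.rpow_nonneg (norm_nonneg _) _) h1 (by positivity)
  obtain ⟨C', hC'⟩ := banach_steinhaus hptw
  have hC'0 : (0:ℝ) ≤ C' := le_trans (norm_nonneg _) (hC' 0)
  refine ⟨C' ^ s, Real.rpow_nonneg hC'0 s, fun f hf => ?_⟩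
  apply Real.tsum_le_of_sum_range_le (fun j => Real.rpow_nonneg (abs_nonneg _) s)
  intro N
  have h2 : ‖T N f‖ ≤ C' := by
    calc ‖T N f‖ ≤ ‖T N‖ * ‖f‖ := (T N).le_opNorm f
      _ ≤ C' * 1 := mul_le_mul (hC' N) hf (norm_nonneg f) hC'0
      _ = C' := mul_one C'
  rw [← hTnorm N f]
  exact Real.rpow_le_rpow (norm_nonneg _) h2 hs0.le

theorem stmt9 {X : Type*} [NormedAddCommGroup X] [NormedSpace ℝ X] [CompleteSpace X]
    {s q r t : ℝ} (hq : 1 ≤ q) (hqs : q < s) (hr : 1 ≤ r) (hrs : r ≤ s)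
    (ht : 1 / q = 1 / s + 1 / t)
    (x : ℕ → X) (hx : WeaklySummable s x)
    (lam : ℕ → ℝ) (hlam : Summable fun j => |lam j| ^ t) :
    AnisoSummable s q r (fun j => lam j • x j) ∧
      anisoNorm s q r (fun j => lam j • x j) ≤
        (∑' j, |lam j| ^ t) ^ (1 / t) * weakNorm s x := by
  have hq0 : (0:ℝ) < q := lt_of_lt_of_le zero_lt_one hq
  have hs1 : (1:ℝ) < s := lt_of_le_of_lt hq hqs
  have hs0 : (0:ℝ) < s := lt_trans zero_lt_one hs1
  have hr0 : (0:ℝ) < r := lt_of_lt_of_le zero_lt_one hr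
  have htinv : 0 < 1 / t := by
    have h1 : 0 < 1 / s := by positivity
    have h2 : 1 / s < 1 / q := one_div_lt_one_div_of_lt hq0 hqs
    linarith
  have ht0 : (0:ℝ) < t := by
    rcases lt_trichotomy t 0 with h | h | h
    · exfalso; have : 1 / t < 0 := by exact one_div_neg.mpr h
      linarith
    · exfalso; rw [h] at htinv; simp at htinv
    · exact h
  have hqt : q < t := by
    have h1 : 1 / t < 1 / q := by
      have : 0 < 1 / s := by positivity
      linarith
    exact lt_of_one_div_lt_one_div ht0 h1
  have hconj : (t/q).HolderConjugate (s/q) := by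
    refine ⟨?_, by positivity, by positivity⟩
    · have hq1 : q * (1/s) + q * (1/t) = q * (1/q) := by rw [← mul_add, ← ht]
      rw [mul_one_div, mul_one_div, mul_one_div, div_self hq0.ne'] at hq1
      rw [inv_div, inv_div, inv_one]
      linarith
  obtain ⟨C, hC0, hC⟩ := weak_sum_bound' hs1 x hx
  have hWdef : weakNorm s x =
      ⨆ f : {f : X →L[ℝ] ℝ // ‖f‖ ≤ 1}, (∑' j, |f.1 (x j)| ^ s) ^ (1 / s) := rfl
  have hbdd : BddAbove (Set.range fun f : {f : X →L[ℝ] ℝ // ‖f‖ ≤ 1} =>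
      (∑' j, |f.1 (x j)| ^ s) ^ (1 / s)) := by
    refine ⟨C ^ (1/s), ?_⟩
    rintro v ⟨f, rfl⟩
    exact Real.rpow_le_rpow (tsum_nonneg fun j => Real.rpow_nonneg (abs_nonneg _) s)
      (hC f.1 f.2) (by positivity)
  set W := weakNorm s x with hW
  have hW0 : 0 ≤ W := by
    rw [hWdef]
    refine le_trans ?_ (le_ciSup hbdd ⟨0, by simp⟩)
    exact Real.rpow_nonneg (tsum_nonneg fun j => Real.rpow_nonneg (abs_nonneg _) s) _
  have key : ∀ f : X →L[ℝ] ℝ, ∑' j, |f (x j)| ^ s ≤ ‖f‖ ^ s * W ^ s := by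
    intro f
    rcases eq_or_ne f 0 with rfl | hf
    · simp only [ContinuousLinearMap.zero_apply, abs_zero, Real.zero_rpow hs0.ne', tsum_zero]
      positivity
    · have hfn : 0 < ‖f‖ := norm_pos_iff.mpr hf
      set g : X →L[ℝ] ℝ := ‖f‖⁻¹ • f with hg
      have hgle : ‖g‖ ≤ 1 := by
        rw [hg]
        refine le_trans (ContinuousLinearMap.opNorm_smul_le _ _) ?_
        rw [norm_inv, norm_norm, inv_mul_cancel₀ hfn.ne']
      have htn : 0 ≤ ∑' j, |g (x j)| ^ s :=
        tsum_nonneg fun j => Real.rpow_nonneg (abs_nonneg _) s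
      have h1 : (∑' j, |g (x j)| ^ s) ^ (1/s) ≤ W := by
        rw [hWdef]
        exact le_ciSup hbdd ⟨g, hgle⟩
      have h2 : ∑' j, |g (x j)| ^ s ≤ W ^ s := by
        have h3 := Real.rpow_le_rpow (Real.rpow_nonneg htn _) h1 hs0.le
        rwa [one_div, Real.rpow_inv_rpow htn hs0.ne'] at h3
      have h3 : ∀ j, |f (x j)| ^ s = ‖f‖ ^ s * |g (x j)| ^ s := by
        intro j
        rw [hg]
        simp only [ContinuousLinearMap.coe_smul', Pi.smul_apply, smul_eq_mul, abs_mul,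
          abs_inv, abs_norm]
        rw [Real.mul_rpow (by positivity) (abs_nonneg _), Real.inv_rpow hfn.le,
          ← mul_assoc, mul_inv_cancel₀ (Real.rpow_pos_of_pos hfn s).ne', one_mul]
      calc ∑' j, |f (x j)| ^ s = ∑' j, ‖f‖ ^ s * |g (x j)| ^ s := tsum_congr h3
        _ = ‖f‖ ^ s * ∑' j, |g (x j)| ^ s := tsum_mul_left
        _ ≤ ‖f‖ ^ s * W ^ s := mul_le_mul_of_nonneg_left h2 (by positivity)
  set L := (∑' j, |lam j| ^ t) ^ (1 / t) with hL
  have hlam0 : 0 ≤ ∑' j, |lam j| ^ t := tsum_nonneg fun j => Real.rpow_nonneg (abs_nonneg _) t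
  have hL0 : 0 ≤ L := Real.rpow_nonneg hlam0 _
  have master : ∀ xs : ℕ → X →L[ℝ] ℝ, MemLr r xs →
      (∀ j, Summable fun k => |xs k (lam j • x j)| ^ s) ∧
      (Summable fun j => (∑' k, |xs k (lam j • x j)| ^ s) ^ (q/s)) ∧
      ∑' j, (∑' k, |xs k (lam j • x j)| ^ s) ^ (q/s) ≤ (L * (lrNorm r xs * W)) ^ q := by
    intro xs hxs
    set R := lrNorm r xs with hRs
    have hRdef : R = (∑' k, ‖xs k‖ ^ r) ^ (1/r) := rfl
    have htsum_r0 : 0 ≤ ∑' k, ‖xs k‖ ^ r := tsum_nonneg fun k => by positivity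
    have hR0 : 0 ≤ R := by rw [hRdef]; positivity
    have hkR : ∀ k, ‖xs k‖ ≤ R := by
      intro k
      have h1 : ‖xs k‖ ^ r ≤ ∑' m, ‖xs m‖ ^ r :=
        Summable.le_tsum hxs k fun m _ => by positivity
      calc ‖xs k‖ = (‖xs k‖ ^ r) ^ (1/r) := by
            rw [one_div, Real.rpow_rpow_inv (norm_nonneg _) hr0.ne']
        _ ≤ R := by
            rw [hRdef]
            exact Real.rpow_le_rpow (by positivity) h1 (by positivity)
    have hnorm_s_le : ∀ k, ‖xs k‖ ^ s ≤ R ^ (s - r) * ‖xs k‖ ^ r := by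
      intro k
      have h1 : ‖xs k‖ ^ s = ‖xs k‖ ^ (s - r) * ‖xs k‖ ^ r := by
        rw [← Real.rpow_add' (norm_nonneg _) (by rw [sub_add_cancel]; exact hs0.ne'),
          sub_add_cancel]
      rw [h1]
      exact mul_le_mul_of_nonneg_right
        (Real.rpow_le_rpow (norm_nonneg _) (hkR k) (by linarith)) (by positivity)
    have hsum_s : Summable fun k => ‖xs k‖ ^ s :=
      Summable.of_nonneg_of_le (fun k => by positivity) hnorm_s_le (hxs.mul_left _)
    have hsum_s_le : ∑' k, ‖xs k‖ ^ s ≤ R ^ s := by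
      calc ∑' k, ‖xs k‖ ^ s ≤ ∑' k, R ^ (s - r) * ‖xs k‖ ^ r :=
            Summable.tsum_le_tsum hnorm_s_le hsum_s (hxs.mul_left _)
        _ = R ^ (s - r) * ∑' k, ‖xs k‖ ^ r := tsum_mul_left
        _ = R ^ (s - r) * R ^ r := by
            rw [hRdef, one_div, Real.rpow_inv_rpow htsum_r0 hr0.ne']
        _ = R ^ s := by
            rw [← Real.rpow_add' hR0 (by rw [sub_add_cancel]; exact hs0.ne'), sub_add_cancel]
    have hinner : ∀ j, Summable fun k => |xs k (x j)| ^ s := by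
      intro j
      refine Summable.of_nonneg_of_le (fun k => by positivity) (fun k => ?_)
        (hsum_s.mul_right (‖x j‖ ^ s))
      calc |xs k (x j)| ^ s ≤ (‖xs k‖ * ‖x j‖) ^ s := by
            refine Real.rpow_le_rpow (abs_nonneg _) ?_ hs0.le
            rw [← Real.norm_eq_abs]
            exact (xs k).le_opNorm (x j)
        _ = ‖xs k‖ ^ s * ‖x j‖ ^ s := Real.mul_rpow (norm_nonneg _) (norm_nonneg _)
    set a : ℕ → ℝ := fun j => ∑' k, |xs k (x j)| ^ s with ha
    have ha0 : ∀ j, 0 ≤ a j := fun j => tsum_nonneg fun k => by positivity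
    have hcol : ∀ k, ∑' j, |xs k (x j)| ^ s ≤ ‖xs k‖ ^ s * W ^ s := fun k => key (xs k)
    have hcolsum : Summable fun k => ∑' j, |xs k (x j)| ^ s :=
      Summable.of_nonneg_of_le (fun k => tsum_nonneg fun j => by positivity) hcol
        (hsum_s.mul_right _)
    have hF : Summable fun kj : ℕ × ℕ => |xs kj.1 (x kj.2)| ^ s := by
      rw [summable_prod_of_nonneg (fun kj => by positivity)]
      exact ⟨fun k => hx (xs k), hcolsum⟩
    have hasum : Summable a := by
      have h1 := (summable_prod_of_nonneg
        (f := fun jk : ℕ × ℕ => |xs jk.2 (x jk.1)| ^ s) (fun jk => by positivity)).mp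
        hF.prod_symm
      exact h1.2
    have hatsum : ∑' j, a j ≤ R ^ s * W ^ s := by
      have hcomm : ∑' j, a j = ∑' k, ∑' j, |xs k (x j)| ^ s :=
        Summable.tsum_comm (f := fun k j => |xs k (x j)| ^ s) hF
      rw [hcomm]
      calc ∑' k, ∑' j, |xs k (x j)| ^ s ≤ ∑' k, ‖xs k‖ ^ s * W ^ s :=
            Summable.tsum_le_tsum hcol hcolsum (hsum_s.mul_right _)
        _ = (∑' k, ‖xs k‖ ^ s) * W ^ s := tsum_mul_right
        _ ≤ R ^ s * W ^ s := mul_le_mul_of_nonneg_right hsum_s_le (by positivity)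
    have hscale : ∀ j k, |xs k (lam j • x j)| ^ s = |lam j| ^ s * |xs k (x j)| ^ s := by
      intro j k
      rw [map_smul, smul_eq_mul, abs_mul, Real.mul_rpow (abs_nonneg _) (abs_nonneg _)]
    have hin : ∀ j, Summable fun k => |xs k (lam j • x j)| ^ s := by
      intro j
      simp only [hscale]
      exact (hinner j).mul_left _
    have htsum_scale : ∀ j, (∑' k, |xs k (lam j • x j)| ^ s) = |lam j| ^ s * a j := by
      intro j
      simp only [hscale]
      exact tsum_mul_left
    have hterm : ∀ j,
        (∑' k, |xs k (lam j • x j)| ^ s) ^ (q/s) = |lam j| ^ q * (a j) ^ (q/s) := by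
      intro j
      rw [htsum_scale j, Real.mul_rpow (by positivity) (ha0 j),
        ← Real.rpow_mul (abs_nonneg _), show s * (q/s) = q by field_simp]
    have hfa : Summable fun j => (|lam j| ^ q) ^ (t/q) := by
      have h1 : ∀ j, (|lam j| ^ q) ^ (t/q) = |lam j| ^ t := by
        intro j
        rw [← Real.rpow_mul (abs_nonneg _), show q * (t/q) = t by field_simp]
      simp only [h1]
      exact hlam
    have hga : Summable fun j => ((a j) ^ (q/s)) ^ (s/q) := by
      have h1 : ∀ j, ((a j) ^ (q/s)) ^ (s/q) = a j := by
        intro j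
        rw [← Real.rpow_mul (ha0 j), show q/s * (s/q) = 1 by field_simp, Real.rpow_one]
      simp only [h1]
      exact hasum
    obtain ⟨hsummable, hbound⟩ := Real.summable_and_inner_le_Lp_mul_Lq_tsum_of_nonneg hconj
      (fun j => Real.rpow_nonneg (abs_nonneg _) _) (fun j => Real.rpow_nonneg (ha0 j) _) hfa hga
    refine ⟨hin, ?_, ?_⟩
    · simp only [hterm]
      exact hsummable
    · have e1 : (∑' j, (|lam j| ^ q) ^ (t/q)) ^ (1/(t/q)) = L ^ q := by
        have h1 : ∀ j, (|lam j| ^ q) ^ (t/q) = |lam j| ^ t := by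
          intro j
          rw [← Real.rpow_mul (abs_nonneg _), show q * (t/q) = t by field_simp]
        simp only [h1]
        rw [hL, ← Real.rpow_mul hlam0]
        congr 1
        field_simp
      have e2 : (∑' j, ((a j) ^ (q/s)) ^ (s/q)) ^ (1/(s/q)) ≤ (R * W) ^ q := by
        have h1 : ∀ j, ((a j) ^ (q/s)) ^ (s/q) = a j := by
          intro j
          rw [← Real.rpow_mul (ha0 j), show q/s * (s/q) = 1 by field_simp, Real.rpow_one]
        simp only [h1]
        have h2 : ∑' j, a j ≤ (R * W) ^ s := by
          rw [Real.mul_rpow hR0 hW0]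
          exact hatsum
        calc (∑' j, a j) ^ (1/(s/q)) ≤ ((R * W) ^ s) ^ (1/(s/q)) :=
              Real.rpow_le_rpow (tsum_nonneg ha0) h2 (by positivity)
          _ = (R * W) ^ q := by
              rw [← Real.rpow_mul (by positivity)]
              congr 1
              rw [one_div]
              field_simp
      calc ∑' j, (∑' k, |xs k (lam j • x j)| ^ s) ^ (q/s)
          = ∑' j, |lam j| ^ q * (a j) ^ (q/s) := tsum_congr hterm
        _ ≤ (∑' j, (|lam j| ^ q) ^ (t/q)) ^ (1/(t/q)) *
              (∑' j, ((a j) ^ (q/s)) ^ (s/q)) ^ (1/(s/q)) := hbound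
        _ ≤ L ^ q * (R * W) ^ q := by
            rw [e1]
            exact mul_le_mul_of_nonneg_left e2 (by positivity)
        _ = (L * (R * W)) ^ q := (Real.mul_rpow hL0 (by positivity)).symm
  constructor
  · intro xs hxs
    obtain ⟨h1, h2, _⟩ := master xs hxs
    exact ⟨h1, h2⟩
  · haveI hne : Nonempty {xs : ℕ → X →L[ℝ] ℝ // MemLr r xs ∧ lrNorm r xs ≤ 1} := by
      refine ⟨⟨fun _ => 0, ?_, ?_⟩⟩
      · unfold MemLr
        simp only [norm_zero, Real.zero_rpow hr0.ne']
        exact summable_zero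
      · unfold lrNorm
        simp only [norm_zero, Real.zero_rpow hr0.ne', tsum_zero,
          Real.zero_rpow (by positivity : (1:ℝ)/r ≠ 0)]
        exact zero_le_one
    have : anisoNorm s q r (fun j => lam j • x j) =
        ⨆ xs : {xs : ℕ → X →L[ℝ] ℝ // MemLr r xs ∧ lrNorm r xs ≤ 1},
          (∑' j, (∑' k, |xs.1 k (lam j • x j)| ^ s) ^ (q / s)) ^ (1 / q) := rfl
    rw [this]
    apply ciSup_le
    intro xs
    obtain ⟨-, -, h3⟩ := master xs.1 xs.2.1
    have h4 : (∑' j, (∑' k, |xs.1 k (lam j • x j)| ^ s) ^ (q / s)) ^ (1 / q) ≤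
        L * (lrNorm r xs.1 * W) := by
      calc (∑' j, (∑' k, |xs.1 k (lam j • x j)| ^ s) ^ (q / s)) ^ (1 / q)
          ≤ ((L * (lrNorm r xs.1 * W)) ^ q) ^ (1 / q) := by
            refine Real.rpow_le_rpow ?_ h3 (by positivity)
            exact tsum_nonneg fun j => Real.rpow_nonneg
              (tsum_nonneg fun k => Real.rpow_nonneg (abs_nonneg _) s) _
        _ = L * (lrNorm r xs.1 * W) := by
            rw [one_div, Real.rpow_rpow_inv ?_ hq0.ne']
            have hR0' : 0 ≤ lrNorm r xs.1 :=
              Real.rpow_nonneg (tsum_nonneg fun k => by positivity) _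
            positivity
    refine le_trans h4 ?_
    have h5 : lrNorm r xs.1 * W ≤ W :=
      mul_le_of_le_one_left hW0 xs.2.2
    exact mul_le_mul_of_nonneg_left h5 hL0
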